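/- Let N be a positive integer, let α be a real number with 1/N^{r-1} < α < 1/2, and let H be an r-uniform hypergraph on N vertices with density at least 1−α (i.e., the number of edges is at least (1−α)·C(N,r)). Then H contains a clique of size at least (1/4)·(1/α)^{1/(r−1)}. -/

import Mathlib

open Finset in
lemma aux_supersets {V : Type} [Fintype V] [DecidableEq V] (f : Finset V) (m : ℕ)
    (hfm : f.card ≤ m) :
    ((Finset.univ.powersetCard m).filter (fun T => f ⊆ T)).card
      = (Fintype.card V - f.card).choose (m - f.card) := by
  have hc : (Finset.univ \ f).card = Fintype.card V - f.card := by
    rw [card_sdiff_of_subset (subset_univ f), card_univ]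
  rw [← hc, ← Finset.card_powersetCard]
  apply Finset.card_bij' (fun T _ => T \ f) (fun U _ => U ∪ f)
  · intro T hT
    simp only [mem_filter, mem_powersetCard] at hT
    obtain ⟨⟨-, hTc⟩, hfT⟩ := hT
    simp only [mem_powersetCard]
    constructor
    · exact sdiff_subset_sdiff (subset_univ T) (le_refl f)
    · rw [card_sdiff_of_subset hfT, hTc]
  · intro U hU
    simp only [mem_powersetCard] at hU
    obtain ⟨hUsub, hUc⟩ := hU
    have hdisj : Disjoint U f := disjoint_of_subset_left hUsub sdiff_disjoint
    simp only [mem_filter, mem_powersetCard]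
    refine ⟨⟨subset_univ _, ?_⟩, subset_union_right⟩
    rw [card_union_of_disjoint hdisj, hUc]
    omega
  · intro T hT
    simp only [mem_filter] at hT
    exact sdiff_union_of_subset hT.2
  · intro U hU
    simp only [mem_powersetCard] at hU
    exact union_sdiff_cancel_right (disjoint_of_subset_left hU.1 sdiff_disjoint)

lemma aux_factorial (r : ℕ) : 2 ^ (r - 1) ≤ r.factorial := by
  induction r with
  | zero => simp
  | succ n ih =>
    rcases Nat.eq_zero_or_pos n with h | h
    · subst h; simp
    · have : 2 ^ (n + 1 - 1) = 2 * 2 ^ (n - 1) := by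
        rw [← pow_succ']
        congr 1
        omega
      rw [this, Nat.factorial_succ]
      exact Nat.mul_le_mul (by omega) ih

set_option maxHeartbeats 1000000 in
/-- A hypergraph of density ≥ 1-α contains a clique of size (1/4)(1/α)^(1/(r-1)). -/
theorem stmt_0 (r N : ℕ) (hr : 0 < r) (hN : 0 < N) (α : ℝ)
    (hα1 : 1 / (N : ℝ) ^ (r - 1) < α) (hα2 : α < 1 / 2)
    (V : Type) [Fintype V] (hV : Fintype.card V = N)
    (E : Finset (Finset V)) (hunif : ∀ e ∈ E, e.card = r)
    (hdens : (1 - α) * (N.choose r : ℝ) ≤ (E.card : ℝ)) :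
    ∃ S : Finset V, (∀ e : Finset V, e ⊆ S → e.card = r → e ∈ E) ∧
      (1 / 4 : ℝ) * (1 / α) ^ ((1 : ℝ) / (r - 1)) ≤ (S.card : ℝ) := by
  classical
  have hα0 : 0 < α := lt_trans (by positivity) hα1
  have hr2 : 2 ≤ r := by
    by_contra h
    have hr1 : r = 1 := by omega
    subst hr1
    simp at hα1
    linarith
  have hN2 : 2 ≤ N := by
    by_contra h
    have hN1 : N = 1 := by omega
    subst hN1
    simp at hα1
    linarith
  set t : ℝ := (r : ℝ) - 1 with ht_def
  have htr : (2:ℝ) ≤ (r:ℝ) := by exact_mod_cast hr2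
  have ht1 : 1 ≤ t := by simp [ht_def]; linarith
  have ht0 : 0 < t := by linarith
  have htne : t ≠ 0 := ne_of_gt ht0
  set c : ℝ := 1 / α with hc_def
  have hc0 : 0 < c := by positivity
  have hc2 : 2 < c := by
    rw [hc_def, lt_div_iff₀ hα0]
    linarith
  have hcast : ((r - 1 : ℕ) : ℝ) = t := by
    rw [Nat.cast_sub hr, Nat.cast_one]
  set β : ℝ := c ^ ((1:ℝ) / t) with hβ_def
  have hβ0 : 0 < β := Real.rpow_pos_of_pos hc0 _
  have hβpow : β ^ (r - 1 : ℕ) = c := by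
    rw [← Real.rpow_natCast β (r-1), hcast, hβ_def, ← Real.rpow_mul hc0.le,
      one_div_mul_cancel htne, Real.rpow_one]
  -- β < N
  have hNp : (0:ℝ) < (N:ℝ) ^ (r - 1) := by positivity
  have hcN : c < (N:ℝ) ^ (r - 1) := by
    rw [div_lt_iff₀ hNp] at hα1
    rw [hc_def, div_lt_iff₀ hα0]
    nlinarith
  have hβN : β < (N : ℝ) := by
    have h1 : (N:ℝ) ^ (r-1 : ℕ) = (N:ℝ) ^ t := by
      rw [← Real.rpow_natCast (N:ℝ) (r-1), hcast]
    calc β = c ^ ((1:ℝ)/t) := hβ_def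
      _ < ((N:ℝ) ^ t) ^ ((1:ℝ)/t) := by
          apply Real.rpow_lt_rpow hc0.le (h1 ▸ hcN) (by positivity)
      _ = (N:ℝ) := by
          rw [← Real.rpow_mul (Nat.cast_nonneg N), mul_one_div_cancel htne,
            Real.rpow_one]
  set k : ℕ := max ⌈β / 4⌉₊ 1 with hk_def
  have hk1 : 1 ≤ k := le_max_right _ _
  have hkβ : β / 4 ≤ (k : ℝ) := by
    refine le_trans (Nat.le_ceil _) ?_
    exact_mod_cast le_max_left _ _
  have hkalt : k = 1 ∨ (k : ℝ) ≤ β / 2 := by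
    rcases le_or_gt β 4 with h4 | h4
    · left
      have h1 : ⌈β/4⌉₊ ≤ 1 := Nat.ceil_le.2 (by push_cast; linarith)
      omega
    · right
      have h1 : 1 ≤ ⌈β/4⌉₊ := Nat.one_le_ceil_iff.2 (by linarith)
      have hke : k = ⌈β/4⌉₊ := by omega
      rw [hke]
      have := Nat.ceil_lt_add_one (show (0:ℝ) ≤ β/4 by linarith)
      linarith
  have hαk : α * (k:ℝ) ^ (r - 1 : ℕ) ≤ 1 / 2 := by
    rcases hkalt with hk | hk
    · rw [hk]
      simp
      linarith
    · have hkk : (0:ℝ) ≤ (k:ℝ) := Nat.cast_nonneg k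
      have h1 : (k:ℝ) ^ (r-1:ℕ) ≤ (β/2) ^ (r-1:ℕ) := pow_le_pow_left₀ hkk hk _
      have h2 : (β/2) ^ (r-1:ℕ) = c / 2 ^ (r-1:ℕ) := by
        rw [div_pow, hβpow]
      have h3 : (2:ℝ) ≤ 2 ^ (r-1:ℕ) := by
        calc (2:ℝ) = 2^1 := (pow_one 2).symm
          _ ≤ 2 ^ (r-1:ℕ) := pow_le_pow_right₀ one_le_two (by omega)
      have h4 : α * (c / 2 ^ (r-1:ℕ)) = 1 / 2 ^ (r-1:ℕ) := by
        rw [hc_def]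
        field_simp
      calc α * (k:ℝ) ^ (r-1:ℕ) ≤ α * ((β/2) ^ (r-1:ℕ)) := by nlinarith
        _ = 1 / 2 ^ (r-1:ℕ) := by rw [h2, h4]
        _ ≤ 1 / 2 := one_div_le_one_div_of_le two_pos h3
  have h2kN : 2 * k ≤ N := by
    rcases hkalt with hk | hk
    · omega
    · have : (2 * k : ℝ) < (N : ℝ) := by push_cast; linarith
      exact_mod_cast this.le
  -- the goal, with β notation
  suffices hS : ∃ S : Finset V, (∀ e : Finset V, e ⊆ S → e.card = r → e ∈ E) ∧
      β / 4 ≤ (S.card : ℝ) by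
    obtain ⟨S, h1, h2⟩ := hS
    exact ⟨S, h1, by rw [show (1/4 : ℝ) * (1/α) ^ ((1:ℝ)/((r:ℝ)-1)) = β / 4 by ring]; exact h2⟩
  set m : ℕ := 2 * k with hm_def
  have hmN : m ≤ N := h2kN
  have hmuniv : m ≤ (Finset.univ : Finset V).card := by rw [Finset.card_univ, hV]; exact hmN
  -- trivial case : r > m
  rcases lt_or_ge m r with hrm | hrm
  · obtain ⟨T, hT⟩ := Finset.powersetCard_nonempty_of_le hmuniv
    rw [Finset.mem_powersetCard] at hT
    refine ⟨T, fun e he hec => absurd (Finset.card_le_card he) (by omega), ?_⟩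
    rw [hT.2]
    push_cast
    calc β / 4 ≤ (k : ℝ) := hkβ
      _ ≤ 2 * k := by linarith [Nat.cast_nonneg (α := ℝ) k]
      _ = (m : ℝ) := by rw [hm_def]; push_cast; ring
  -- main case
  set P : Finset (Finset V) := Finset.univ.powersetCard m with hP_def
  set nonE : Finset (Finset V) := Finset.univ.powersetCard r \ E with hnonE_def
  have hEsub : E ⊆ Finset.univ.powersetCard r := fun e he =>
    Finset.mem_powersetCard.2 ⟨Finset.subset_univ e, hunif e he⟩
  have hPr_card : (Finset.univ.powersetCard r : Finset (Finset V)).card = N.choose r := by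
    rw [Finset.card_powersetCard, Finset.card_univ, hV]
  have hnonE_card : (nonE.card : ℝ) ≤ α * N.choose r := by
    have h1 : nonE.card = N.choose r - E.card := by
      rw [hnonE_def, Finset.card_sdiff_of_subset hEsub, hPr_card]
    have h2 : E.card ≤ N.choose r := hPr_card ▸ Finset.card_le_card hEsub
    rw [h1, Nat.cast_sub h2]
    linarith
  set bad : Finset V → Finset (Finset V) := fun T => nonE.filter (· ⊆ T) with hbad_def
  have hPne : P.Nonempty := Finset.powersetCard_nonempty_of_le hmuniv
  obtain ⟨T₀, hT₀P, hT₀min⟩ := P.exists_min_image (fun T => (bad T).card) hPne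
  have hT₀ : T₀ ⊆ Finset.univ ∧ T₀.card = m := Finset.mem_powersetCard.1 hT₀P
  -- double counting
  have hsum : ∑ T ∈ P, (bad T).card = nonE.card * (N - r).choose (m - r) := by
    have h1 : ∑ T ∈ P, (bad T).card
        = ∑ f ∈ nonE, ((P.filter (fun T => f ⊆ T)).card) := by
      simp only [hbad_def, Finset.card_filter]
      exact Finset.sum_comm
    rw [h1]
    calc ∑ f ∈ nonE, ((P.filter (fun T => f ⊆ T)).card)
        = ∑ _f ∈ nonE, (N - r).choose (m - r) := by
          apply Finset.sum_congr rfl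
          intro f hf
          have hfc : f.card = r := by
            rw [hnonE_def] at hf
            exact (Finset.mem_powersetCard.1 (Finset.mem_sdiff.1 hf).1).2
          rw [hP_def, aux_supersets f m (by omega : f.card ≤ m), hfc, hV]
      _ = nonE.card * (N - r).choose (m - r) := by
          rw [Finset.sum_const, smul_eq_mul]
  have hPcard : P.card = N.choose m := by
    rw [hP_def, Finset.card_powersetCard, Finset.card_univ, hV]
  have hmin_sum : N.choose m * (bad T₀).card ≤ ∑ T ∈ P, (bad T).card := by
    rw [← hPcard, ← smul_eq_mul]
    exact Finset.card_nsmul_le_sum P _ _ (fun T hT => hT₀min T hT)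
  -- conclude (bad T₀).card ≤ α * C(m,r) in ℝ
  have hNm_pos : 0 < (N.choose m : ℝ) := by
    exact_mod_cast Nat.choose_pos hmN
  have hbadα : ((bad T₀).card : ℝ) ≤ α * (m.choose r : ℝ) := by
    have hid : (N.choose m : ℝ) * m.choose r = (N.choose r : ℝ) * (N - r).choose (m - r) := by
      exact_mod_cast congrArg (Nat.cast (R := ℝ)) (Nat.choose_mul (n := N) hrm)
    have h1 : (N.choose m : ℝ) * (bad T₀).card ≤ (nonE.card : ℝ) * (N - r).choose (m - r) := by
      have h1' := hmin_sum
      rw [hsum] at h1'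
      exact_mod_cast h1'
    have h2 : (nonE.card : ℝ) * (N - r).choose (m - r)
        ≤ α * ((N.choose r : ℝ) * (N - r).choose (m - r)) := by
      calc (nonE.card : ℝ) * (N - r).choose (m - r)
          ≤ (α * (N.choose r : ℝ)) * (N - r).choose (m - r) :=
            mul_le_mul_of_nonneg_right hnonE_card (Nat.cast_nonneg _)
        _ = α * ((N.choose r : ℝ) * (N - r).choose (m - r)) := mul_assoc _ _ _
    rw [← hid] at h2
    have h3 : (N.choose m : ℝ) * (bad T₀).card ≤ (N.choose m : ℝ) * (α * m.choose r) := by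
      calc (N.choose m : ℝ) * (bad T₀).card ≤ _ := h1
        _ ≤ α * ((N.choose m : ℝ) * m.choose r) := h2
        _ = (N.choose m : ℝ) * (α * m.choose r) := by ring
    exact le_of_mul_le_mul_left h3 hNm_pos
  -- numeric bound : α * C(m,r) ≤ k
  have hbadk : (bad T₀).card ≤ k := by
    have hfact : (2:ℝ) ^ (r-1:ℕ) ≤ (r.factorial : ℝ) := by
      exact_mod_cast aux_factorial r
    have hcp : ((m.choose r : ℝ)) ≤ (m:ℝ) ^ r / r.factorial := Nat.choose_le_pow_div r m
    have hfp : (0:ℝ) < (r.factorial : ℝ) := by exact_mod_cast r.factorial_pos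
    have h2p : (0:ℝ) < (2:ℝ) ^ (r-1:ℕ) := by positivity
    have hcp2 : ((m.choose r : ℝ)) ≤ (m:ℝ) ^ r / 2 ^ (r-1:ℕ) := by
      refine hcp.trans (div_le_div_of_nonneg_left (by positivity) h2p hfact)
    have hmr : (m:ℝ) ^ r = 2 ^ r * (k:ℝ) ^ r := by
      rw [hm_def]
      push_cast
      rw [mul_pow]
    have hkr : (k:ℝ) ^ r = (k:ℝ) ^ (r-1:ℕ) * k := by
      rw [← pow_succ]
      congr 1
      omega
    have h2r : (2:ℝ) ^ r = 2 * 2 ^ (r-1:ℕ) := by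
      rw [← pow_succ']
      congr 1
      omega
    have hchain : ((bad T₀).card : ℝ) ≤ (k : ℝ) := by
      have hk0 : (0:ℝ) ≤ (k:ℝ) := Nat.cast_nonneg k
      calc ((bad T₀).card : ℝ) ≤ α * (m.choose r : ℝ) := hbadα
        _ ≤ α * ((m:ℝ) ^ r / 2 ^ (r-1:ℕ)) := mul_le_mul_of_nonneg_left hcp2 hα0.le
        _ = 2 * (α * (k:ℝ) ^ (r-1:ℕ)) * k := by
            rw [hmr, h2r, hkr]
            field_simp
        _ ≤ 2 * (1/2) * k := by
            refine mul_le_mul_of_nonneg_right ?_ hk0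
            refine mul_le_mul_of_nonneg_left hαk (by norm_num)
        _ = k := by ring
    exact_mod_cast hchain
  -- deletion
  have hVne : Nonempty V := by
    rw [← Fintype.card_pos_iff, hV]
    exact hN
  set pick : Finset V → V := fun f => if h : f.Nonempty then h.choose else Classical.arbitrary V
    with hpick_def
  have hpick_mem : ∀ f : Finset V, f.Nonempty → pick f ∈ f := by
    intro f hf
    rw [hpick_def]
    simp only [dif_pos hf]
    exact hf.choose_spec
  set D : Finset V := (bad T₀).image pick with hD_def
  refine ⟨T₀ \ D, ?_, ?_⟩
  · intro e he hec
    by_contra heE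
    have heT : e ⊆ T₀ := he.trans (Finset.sdiff_subset)
    have heb : e ∈ bad T₀ := by
      rw [hbad_def]
      refine Finset.mem_filter.2 ⟨Finset.mem_sdiff.2 ⟨?_, heE⟩, heT⟩
      exact Finset.mem_powersetCard.2 ⟨Finset.subset_univ e, hec⟩
    have hene : e.Nonempty := Finset.card_pos.1 (by omega)
    have h1 : pick e ∈ D := hD_def ▸ Finset.mem_image_of_mem pick heb
    have h2 : pick e ∈ T₀ \ D := he (hpick_mem e hene)
    exact (Finset.mem_sdiff.1 h2).2 h1
  · have hDk : D.card ≤ k := le_trans (Finset.card_image_le) hbadk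
    have hScard : k ≤ (T₀ \ D).card := by
      have h1 : T₀.card - D.card ≤ (T₀ \ D).card := Finset.le_card_sdiff D T₀
      omega
    calc β / 4 ≤ (k : ℝ) := hkβ
      _ ≤ ((T₀ \ D).card : ℝ) := by exact_mod_cast hScard
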